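/- In the winner-bid auction with ties to h, suppose σ_l is supported in {0,...,p} with p in the Nash range and σ_l(r) ≥ σ_l(p) ≥ 1/(2(c_h − c_l) − 2τ + 1) for all b ≤ r ≤ p, where τ = p − c_l. Then for each s with b ≤ s < p, the high-valuation agent's expected payoff of bidding s strictly exceeds that of bidding s − 1: U(δ_s | σ_l; v_h) − U(δ_{s−1} | σ_l; v_h) = Σ_{r≥s} σ_l(r) − 1 + 2σ_l(s)(c_h − s) > 0. -/
import Mathlib


open Finset Filter

/-- Payoff to the low-valuation agent in the winner-bid auction when she bids `b`
and the high-valuation agent bids `r` (ties won by the high-valuation agent). -/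
noncomputable def UlWB (vl : ℕ) (b r : ℕ) : ℝ := if r < b then (vl : ℝ) - b else (r : ℝ)

/-- Payoff to the high-valuation agent in the winner-bid auction when she bids `b`
and the low-valuation agent bids `r` (ties won by the high-valuation agent). -/
noncomputable def UhWB (vh : ℕ) (b r : ℕ) : ℝ := if r ≤ b then (vh : ℝ) - b else (r : ℝ)

/-- A mixed strategy on the bid set `{0, ..., pbar}`. -/
def IsMixed (pbar : ℕ) (σ : ℕ → ℝ) : Prop :=
  (∀ b, 0 ≤ σ b) ∧ (∀ b, pbar < b → σ b = 0) ∧ ∑ b ∈ Finset.range (pbar + 1), σ b = 1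

/-- Expected payoff for the low-valuation agent of bidding `b` against `σh`. -/
noncomputable def eUl (pbar vl : ℕ) (σh : ℕ → ℝ) (b : ℕ) : ℝ :=
  ∑ r ∈ Finset.range (pbar + 1), σh r * UlWB vl b r

/-- Expected payoff for the high-valuation agent of bidding `b` against `σl`. -/
noncomputable def eUh (pbar vh : ℕ) (σl : ℕ → ℝ) (b : ℕ) : ℝ :=
  ∑ r ∈ Finset.range (pbar + 1), σl r * UhWB vh b r

/-- Nash equilibrium of the winner-bid auction. -/
def IsNashWB (pbar vl vh : ℕ) (σl σh : ℕ → ℝ) : Prop :=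
  IsMixed pbar σl ∧ IsMixed pbar σh ∧
  (∀ b ≤ pbar, 0 < σl b → ∀ b' ≤ pbar, eUl pbar vl σh b' ≤ eUl pbar vl σh b) ∧
  (∀ b ≤ pbar, 0 < σh b → ∀ b' ≤ pbar, eUh pbar vh σl b' ≤ eUh pbar vh σl b)

/-- Expected payoff of the low-valuation agent at a mixed profile. -/
noncomputable def piL (pbar vl : ℕ) (σl σh : ℕ → ℝ) : ℝ :=
  ∑ b ∈ Finset.range (pbar + 1), σl b * eUl pbar vl σh b

/-- Expected payoff of the high-valuation agent at a mixed profile. -/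
noncomputable def piH (pbar vh : ℕ) (σl σh : ℕ → ℝ) : ℝ :=
  ∑ b ∈ Finset.range (pbar + 1), σh b * eUh pbar vh σl b

/-- Weak payoff monotonicity for the low-valuation agent. -/
def WPMl (pbar vl : ℕ) (σl σh : ℕ → ℝ) : Prop :=
  ∀ a ≤ pbar, ∀ b ≤ pbar, σl b < σl a → eUl pbar vl σh b < eUl pbar vl σh a

/-- Weak payoff monotonicity for the high-valuation agent. -/
def WPMh (pbar vh : ℕ) (σl σh : ℕ → ℝ) : Prop :=
  ∀ a ≤ pbar, ∀ b ≤ pbar, σh b < σh a → eUh pbar vh σl b < eUh pbar vh σl a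

/-- Expected bid under a mixed strategy. -/
noncomputable def Ebid (pbar : ℕ) (σ : ℕ → ℝ) : ℝ :=
  ∑ b ∈ Finset.range (pbar + 1), σ b * b

/-- If `σl` is supported in `{0,...,p}` with `p` in the Nash range, `σl r ≥ σl p` for all
`b ≤ r ≤ p`, and `σl p ≥ 1/(2(ch - cl) - 2τ + 1)` with `τ = p - cl`, then for every `s` with
`b ≤ s < p` the high-valuation agent's expected payoff of bidding `s` strictly exceeds that
of bidding `s - 1`, with the stated identity. -/
theorem stmt14 (pbar vl vh cl ch : ℕ) (hvl : vl = 2 * cl) (hvh : vh = 2 * ch)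
    (hcl : 0 < cl) (hclch : cl < ch) (hpbar : ch ≤ pbar)
    (σl : ℕ → ℝ) (hmix : IsMixed pbar σl)
    (p b : ℕ) (hp1 : cl ≤ p) (hp2 : p ≤ ch) (hb : 1 ≤ b)
    (hsupp : ∀ r, 0 < σl r → r ≤ p)
    (hlow : ∀ r, b ≤ r → r ≤ p → σl p ≤ σl r)
    (hlb : (1 : ℝ) / ((2 * (ch - cl) - 2 * (p - cl) + 1 : ℕ) : ℝ) ≤ σl p) :
    ∀ s, b ≤ s → s < p →
      (eUh pbar vh σl s - eUh pbar vh σl (s - 1) =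
        (∑ r ∈ Finset.Icc s pbar, σl r) - 1 + 2 * σl s * ((ch : ℝ) - s)) ∧
      0 < eUh pbar vh σl s - eUh pbar vh σl (s - 1) := by

  intro s hbs hsp
  have hs1 : 1 ≤ s := le_trans hb hbs
  have hspbar : s ≤ pbar := by omega
  obtain ⟨hnn, hzero, hsum1⟩ := hmix
  -- rewrite Icc s pbar as Ico s (pbar+1)
  have hIcc : Finset.Icc s pbar = Finset.Ico s (pbar + 1) := by
    rw [Finset.Ico_add_one_right_eq_Icc]
  -- split the total probability
  have hsplit : ∑ r ∈ Finset.range s, σl r + ∑ r ∈ Finset.Ico s (pbar + 1), σl r = 1 := by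
    rw [Finset.range_eq_Ico, Finset.sum_Ico_consecutive _ (Nat.zero_le s) (by omega),
      ← Finset.range_eq_Ico]
    exact hsum1
  -- the key difference computation
  have hdiff : eUh pbar vh σl s - eUh pbar vh σl (s - 1) =
      ∑ r ∈ Finset.range (pbar + 1), σl r * (UhWB vh s r - UhWB vh (s - 1) r) := by
    simp only [eUh, mul_sub, Finset.sum_sub_distrib]
  have hsplit2 : ∑ r ∈ Finset.range (pbar + 1), σl r * (UhWB vh s r - UhWB vh (s - 1) r)
      = ∑ r ∈ Finset.range s, σl r * (UhWB vh s r - UhWB vh (s - 1) r)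
        + ∑ r ∈ Finset.Ico s (pbar + 1), σl r * (UhWB vh s r - UhWB vh (s - 1) r) := by
    rw [Finset.range_eq_Ico,
      ← Finset.sum_Ico_consecutive _ (Nat.zero_le s) (by omega : s ≤ pbar + 1),
      ← Finset.range_eq_Ico]
  have hlowpart : ∑ r ∈ Finset.range s, σl r * (UhWB vh s r - UhWB vh (s - 1) r)
      = -∑ r ∈ Finset.range s, σl r := by
    rw [← Finset.sum_neg_distrib]
    apply Finset.sum_congr rfl
    intro r hr
    rw [Finset.mem_range] at hr
    have h1 : r ≤ s := le_of_lt hr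
    have h2 : r ≤ s - 1 := by omega
    have hc : ((s - 1 : ℕ) : ℝ) = (s : ℝ) - 1 := by
      rw [Nat.cast_sub hs1]; norm_num
    simp only [UhWB, if_pos h1, if_pos h2, hc]
    ring
  have hhighpart : ∑ r ∈ Finset.Ico s (pbar + 1), σl r * (UhWB vh s r - UhWB vh (s - 1) r)
      = σl s * ((vh : ℝ) - 2 * s) := by
    rw [Finset.sum_eq_single_of_mem s (by simp [Finset.mem_Ico]; omega)]
    · have h1 : s ≤ s := le_refl s
      have h2 : ¬ (s ≤ s - 1) := by omega
      simp only [UhWB, if_pos h1, if_neg h2]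
      ring
    · intro r hr hne
      rw [Finset.mem_Ico] at hr
      have h1 : ¬ (r ≤ s) := by omega
      have h2 : ¬ (r ≤ s - 1) := by omega
      simp [UhWB, if_neg h1, if_neg h2]
  have hident : eUh pbar vh σl s - eUh pbar vh σl (s - 1) =
      (∑ r ∈ Finset.Icc s pbar, σl r) - 1 + 2 * σl s * ((ch : ℝ) - s) := by
    rw [hdiff, hsplit2, hlowpart, hhighpart, hIcc]
    have : ∑ r ∈ Finset.range s, σl r = 1 - ∑ r ∈ Finset.Ico s (pbar + 1), σl r := by
      linarith [hsplit]
    rw [this]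
    push_cast [hvh]
    ring
  refine ⟨hident, ?_⟩
  rw [hident]
  -- positivity
  set D : ℕ := 2 * (ch - cl) - 2 * (p - cl) + 1 with hD
  have hDval : D = 2 * ch - 2 * p + 1 := by omega
  have hDpos : 0 < D := by omega
  have hDr : (0 : ℝ) < (D : ℝ) := by exact_mod_cast hDpos
  have hσp : (1 : ℝ) / (D : ℝ) ≤ σl p := hlb
  have hσppos : 0 < σl p := lt_of_lt_of_le (by positivity) hσp
  -- sum over Icc s pbar equals sum over Icc s p
  have htail : ∑ r ∈ Finset.Icc s pbar, σl r = ∑ r ∈ Finset.Icc s p, σl r := by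
    rw [← Finset.sum_subset (Finset.Icc_subset_Icc_right (by omega : p ≤ pbar))]
    intro r hr hnr
    rw [Finset.mem_Icc] at hr hnr
    by_contra hne
    have : 0 < σl r := lt_of_le_of_ne (hnn r) (Ne.symm hne)
    exact hnr ⟨hr.1, hsupp r this⟩
  have hcard : (Finset.Icc s p).card = p + 1 - s := by
    rw [Nat.card_Icc]
  have hsumlb : ((p + 1 - s : ℕ) : ℝ) * σl p ≤ ∑ r ∈ Finset.Icc s p, σl r := by
    rw [← hcard]
    calc ((Finset.Icc s p).card : ℝ) * σl p = ∑ _r ∈ Finset.Icc s p, σl p := by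
          rw [Finset.sum_const, nsmul_eq_mul]
      _ ≤ ∑ r ∈ Finset.Icc s p, σl r := by
          apply Finset.sum_le_sum
          intro r hr
          rw [Finset.mem_Icc] at hr
          exact hlow r (le_trans hbs hr.1) hr.2
  have hσs : σl p ≤ σl s := hlow s hbs (le_of_lt hsp)
  have hchs : (0 : ℝ) < (ch : ℝ) - s := by
    have : s < ch := by omega
    have := Nat.cast_lt (α := ℝ).mpr this
    linarith
  have hDσ : (1 : ℝ) ≤ (D : ℝ) * σl p := by
    rw [div_le_iff₀ hDr] at hσp
    linarith
  have hcoef : (D : ℝ) < ((p + 1 - s : ℕ) : ℝ) + 2 * ((ch : ℝ) - s) := by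
    have h1 : ((p + 1 - s : ℕ) : ℝ) = (p : ℝ) + 1 - s := by
      have : s ≤ p + 1 := by omega
      push_cast [Nat.cast_sub this]; ring
    have h2 : (D : ℝ) = 2 * (ch : ℝ) - 2 * p + 1 := by
      rw [hDval]
      have : 2 * p ≤ 2 * ch := by omega
      push_cast [Nat.cast_sub this]; ring
    rw [h1, h2]
    have : (s : ℝ) < p := by exact_mod_cast hsp
    linarith
  have key : (D : ℝ) * σl p < ((p + 1 - s : ℕ) : ℝ) * σl p + 2 * σl s * ((ch : ℝ) - s) := by
    have h1 : (D : ℝ) * σl p < (((p + 1 - s : ℕ) : ℝ) + 2 * ((ch : ℝ) - s)) * σl p :=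
      mul_lt_mul_of_pos_right hcoef hσppos
    have h2 : 2 * σl p * ((ch : ℝ) - s) ≤ 2 * σl s * ((ch : ℝ) - s) := by
      apply mul_le_mul_of_nonneg_right _ (le_of_lt hchs)
      linarith
    nlinarith
  have : (1 : ℝ) < (∑ r ∈ Finset.Icc s pbar, σl r) + 2 * σl s * ((ch : ℝ) - s) := by
    rw [htail]
    calc (1 : ℝ) ≤ (D : ℝ) * σl p := hDσ
      _ < ((p + 1 - s : ℕ) : ℝ) * σl p + 2 * σl s * ((ch : ℝ) - s) := key
      _ ≤ (∑ r ∈ Finset.Icc s p, σl r) + 2 * σl s * ((ch : ℝ) - s) := by linarith [hsumlb]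
  linarith
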